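/- Every move sequence that cleanly computes m ≥ 1 contains at least 2m − 1 squaring operations; hence the direct strategy, which uses exactly 2m − 1 squaring operations, is time-optimal. -/
import Mathlib


/-- A move sequence in the reversible pebble game modelling intermediate
uncomputation of iterated out-of-place squarings.  `conf t` is the
configuration (finite set of pebbled nodes) at time `t ≤ T`; at step
`t < T` exactly the node `move t` is toggled, subject to the legality
condition that either `move t = 0` or `move t ≥ 1` and its predecessor
is pebbled. -/
structure MoveSeq where
  /-- total move count -/
  T : ℕ
  /-- configuration at each time step -/
  conf : ℕ → Finset ℕ
  /-- the node toggled at step `t` (relevant for `t < T`) -/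
  move : ℕ → ℕ
  init : conf 0 = ∅
  legal : ∀ t < T, move t = 0 ∨ (1 ≤ move t ∧ move t - 1 ∈ conf t)
  step : ∀ t < T, conf (t + 1) =
    if move t ∈ conf t then (conf t).erase (move t) else insert (move t) (conf t)

/-- The space of a move sequence: the maximum number of pebbled nodes over
all visited configurations. -/
def MoveSeq.space (M : MoveSeq) : ℕ :=
  (Finset.range (M.T + 1)).sup fun t => (M.conf t).card

/-- The number of squaring operations: the number of moves toggling a node `i ≥ 1`. -/
def MoveSeq.squarings (M : MoveSeq) : ℕ :=
  ((Finset.range M.T).filter fun t => 1 ≤ M.move t).card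

/-- The sequence cleanly computes `m` if its final configuration is `{m}`. -/
def MoveSeq.CleanlyComputes (M : MoveSeq) (m : ℕ) : Prop :=
  M.conf M.T = {m}

/-- Some configuration visited by the sequence contains the node `i`. -/
def MoveSeq.Visits (M : MoveSeq) (i : ℕ) : Prop :=
  ∃ t ≤ M.T, i ∈ M.conf t

def MoveSeq.cnt (M : MoveSeq) (i t : ℕ) : ℕ :=
  ((Finset.range t).filter fun s => M.move s = i).card

lemma MoveSeq.mem_iff_odd (M : MoveSeq) (i : ℕ) :
    ∀ t, t ≤ M.T → (i ∈ M.conf t ↔ Odd (M.cnt i t)) := by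
  intro t
  induction t with
  | zero => intro _; simp [MoveSeq.cnt, M.init]
  | succ t ih =>
    intro ht
    have ht' : t < M.T := ht
    have h1 := ih ht'.le
    have hstep := M.step t ht'
    have hcnt : M.cnt i (t+1) = M.cnt i t + (if M.move t = i then 1 else 0) := by
      unfold MoveSeq.cnt
      rw [Finset.range_add_one, Finset.filter_insert]
      split
      · rw [Finset.card_insert_of_notMem (by simp)]
      · simp
    by_cases h : M.move t = i
    · have hflip : i ∈ M.conf (t+1) ↔ ¬ i ∈ M.conf t := by
        rw [hstep]
        subst h
        by_cases hmem : M.move t ∈ M.conf t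
        · simp [hmem]
        · simp [hmem]
      rw [hflip, hcnt, if_pos h, h1, Nat.odd_add_one]
    · have hsame : (i ∈ M.conf (t+1)) ↔ i ∈ M.conf t := by
        rw [hstep]
        by_cases hmem : M.move t ∈ M.conf t
        · simp only [if_pos hmem, Finset.mem_erase]
          constructor
          · exact fun hh => hh.2
          · exact fun hh => ⟨fun he => h he.symm, hh⟩
        · simp only [if_neg hmem, Finset.mem_insert]
          constructor
          · rintro (he | hh)
            · exact absurd he.symm h
            · exact hh
          · exact Or.inr
      rw [hsame, hcnt, if_neg h, Nat.add_zero, h1]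

lemma MoveSeq.cnt_mono (M : MoveSeq) (i : ℕ) {s t : ℕ} (h : s ≤ t) :
    M.cnt i s ≤ M.cnt i t :=
  Finset.card_le_card (Finset.filter_subset_filter _ (Finset.range_subset_range.mpr h))

lemma MoveSeq.cnt_pos_of_mem (M : MoveSeq) {i s : ℕ} (hs : s ≤ M.T)
    (hi : i ∈ M.conf s) : 1 ≤ M.cnt i M.T := by
  have h := (M.mem_iff_odd i s hs).mp hi
  exact h.pos.trans_le (M.cnt_mono i hs)

lemma MoveSeq.cnt_pred_pos (M : MoveSeq) {i : ℕ} (hi : 1 ≤ i)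
    (h : 1 ≤ M.cnt i M.T) : 1 ≤ M.cnt (i - 1) M.T := by
  rw [MoveSeq.cnt] at h
  obtain ⟨s, hs⟩ := Finset.card_pos.mp h
  rw [Finset.mem_filter, Finset.mem_range] at hs
  rcases M.legal s hs.1 with h0 | ⟨_, hp⟩
  · omega
  · rw [hs.2] at hp
    exact M.cnt_pos_of_mem hs.1.le hp

lemma MoveSeq.cnt_pos_all (M : MoveSeq) {m : ℕ} (hm : 1 ≤ m)
    (hc : M.conf M.T = {m}) : ∀ i, 1 ≤ i → i ≤ m → 1 ≤ M.cnt i M.T := by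
  have hm' : 1 ≤ M.cnt m M.T :=
    M.cnt_pos_of_mem le_rfl (by rw [hc]; exact Finset.mem_singleton_self m)
  have key : ∀ j, j ≤ m - 1 → 1 ≤ M.cnt (m - j) M.T := by
    intro j
    induction j with
    | zero => intro _; simpa using hm'
    | succ j ih =>
      intro hj
      have h1 := ih (by omega)
      have : m - (j + 1) = (m - j) - 1 := by omega
      rw [this]
      exact M.cnt_pred_pos (by omega) h1
  intro i h1 h2
  have := key (m - i) (by omega)
  rwa [Nat.sub_sub_self h2] at this


/-- every clean computation of `m ≥ 1` contains at least
`2m - 1` squaring operations. -/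
theorem squarings_lower_bound (m : ℕ) (hm : 1 ≤ m) (M : MoveSeq)
    (hc : M.CleanlyComputes m) :
    2 * m - 1 ≤ M.squarings := by
  have hc' : M.conf M.T = {m} := hc
  have hpos := M.cnt_pos_all hm hc
  -- nodes 1..m-1 are toggled an even number of times, hence ≥ 2
  have htwo : ∀ i, 1 ≤ i → i ≤ m - 1 → 2 ≤ M.cnt i M.T := by
    intro i h1 h2
    have hne : i ∉ M.conf M.T := by
      rw [hc, Finset.mem_singleton]; omega
    have heven : ¬ Odd (M.cnt i M.T) := fun ho =>
      hne ((M.mem_iff_odd i M.T le_rfl).mpr ho)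
    have h1' := hpos i h1 (by omega)
    rw [Nat.not_odd_iff_even] at heven
    rcases heven with ⟨k, hk⟩
    omega
  -- squarings ≥ sum over i ∈ Icc 1 m of cnt i T
  have hsum : ∑ i ∈ Finset.Icc 1 m, M.cnt i M.T ≤ M.squarings := by
    rw [MoveSeq.squarings]
    have hdisj : ∀ i ∈ Finset.Icc 1 m, ∀ j ∈ Finset.Icc 1 m, i ≠ j →
        Disjoint ((Finset.range M.T).filter fun s => M.move s = i)
          ((Finset.range M.T).filter fun s => M.move s = j) := by
      intro i _ j _ hij
      rw [Finset.disjoint_left]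
      intro s hsi hsj
      rw [Finset.mem_filter] at hsi hsj
      exact hij (hsi.2.symm.trans hsj.2)
    calc ∑ i ∈ Finset.Icc 1 m, M.cnt i M.T
        = ((Finset.Icc 1 m).biUnion fun i =>
            (Finset.range M.T).filter fun s => M.move s = i).card :=
          (Finset.card_biUnion hdisj).symm
      _ ≤ _ := by
          apply Finset.card_le_card
          intro s hs
          rw [Finset.mem_biUnion] at hs
          obtain ⟨i, hi, hsi⟩ := hs
          rw [Finset.mem_filter] at hsi ⊢
          rw [Finset.mem_Icc] at hi
          exact ⟨hsi.1, by omega⟩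
  have hsplit : ∑ i ∈ Finset.Icc 1 m, M.cnt i M.T
      = M.cnt m M.T + ∑ i ∈ Finset.Icc 1 (m - 1), M.cnt i M.T := by
    have : Finset.Icc 1 m = insert m (Finset.Icc 1 (m - 1)) := by
      ext x; simp [Finset.mem_Icc, Finset.mem_insert]; omega
    rw [this, Finset.sum_insert (by simp [Finset.mem_Icc]; omega)]
  have hlow : 2 * (m - 1) ≤ ∑ i ∈ Finset.Icc 1 (m - 1), M.cnt i M.T := by
    calc 2 * (m - 1) = ∑ _i ∈ Finset.Icc 1 (m - 1), 2 := by
          rw [Finset.sum_const, smul_eq_mul, Nat.card_Icc]; omega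
      _ ≤ _ := Finset.sum_le_sum fun i hi => by
          rw [Finset.mem_Icc] at hi; exact htwo i hi.1 hi.2
  have hmT := hpos m hm le_rfl
  omega
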